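/- If γ ∈ (0,1] and γR > E_si(γ), then the open interval ((1+γ)/γ · G_si(γ), (1+γ)/γ · (γR − F_si(γ))) of bias values is nonempty; i.e., G_si(γ) < γR − F_si(γ). -/
import Mathlib


open Finset

/-- Weighted Chebyshev sum inequality. -/
lemma weighted_cheb {ι : Type} [Fintype ι] (w a b : ι → ℝ) (hw : ∀ i, 0 ≤ w i)
    (hab : ∀ i j, 0 ≤ (a i - a j) * (b i - b j)) :
    (∑ i, w i * a i) * (∑ i, w i * b i) ≤ (∑ i, w i) * (∑ i, w i * (a i * b i)) := by
  have key : 0 ≤ ∑ i, ∑ j, w i * w j * ((a i - a j) * (b i - b j)) := by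
    apply Finset.sum_nonneg; intro i _
    apply Finset.sum_nonneg; intro j _
    exact mul_nonneg (mul_nonneg (hw i) (hw j)) (hab i j)
  have expand : ∑ i, ∑ j, w i * w j * ((a i - a j) * (b i - b j)) =
      2 * ((∑ i, w i) * (∑ i, w i * (a i * b i)) - (∑ i, w i * a i) * (∑ i, w i * b i)) := by
    have h1 : ∀ i j : ι, w i * w j * ((a i - a j) * (b i - b j)) =
        w i * (a i * b i) * w j - w i * a i * (w j * b j)
        - w i * b i * (w j * a j) + w i * (w j * (a j * b j)) := by
      intro i j; ring
    simp only [h1, Finset.sum_add_distrib, Finset.sum_sub_distrib,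
      ← Finset.sum_mul, ← Finset.mul_sum]
    ring
  rw [expand] at key
  linarith

theorem stmt3 {U V : Type} [Fintype U] [Fintype V] [Nonempty U] [Nonempty V]
    (Q : U → V → ℝ) (hQ0 : ∀ u v, 0 ≤ Q u v)
    (hQ1 : ∑ u, ∑ v, Q u v = 1)
    (hm : ∀ v, 0 < ∑ u, Q u v)
    (γ : ℝ) (hγ0 : 0 < γ) (hγ1 : γ ≤ 1) (R : ℝ) (hR : 0 < R)
    (hrate : γ * R > Real.logb 2 (∑ v, (∑ u, Q u v) *
        ((∑ u, (Q u v / (∑ u', Q u' v)) ^ ((1:ℝ)/(1+γ))) ^ (1+γ)))) :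
    (1+γ)/γ * Real.logb 2 (∑ v, (∑ u, Q u v) *
        (∑ u, (Q u v / (∑ u', Q u' v)) ^ ((1:ℝ)/(1+γ)))) <
      (1+γ)/γ * (γ * R - Real.logb 2 (∑ v, (∑ u, Q u v) *
        ((∑ u, (Q u v / (∑ u', Q u' v)) ^ ((1:ℝ)/(1+γ))) ^ γ))) := by
  set p : V → ℝ := fun v => ∑ u, Q u v with hp
  set S : V → ℝ := fun v => ∑ u, (Q u v / p v) ^ ((1:ℝ)/(1+γ)) with hS
  have hpv : ∀ v, 0 < p v := hm
  have hSv : ∀ v, 0 < S v := by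
    intro v
    have : ∃ u : U, 0 < Q u v := by
      by_contra h
      push_neg at h
      have : p v = 0 := le_antisymm (Finset.sum_nonpos fun u _ => h u) (le_of_lt (hpv v))
      exact absurd this (ne_of_gt (hpv v))
    obtain ⟨u0, hu0⟩ := this
    apply Finset.sum_pos' (fun u _ => Real.rpow_nonneg (div_nonneg (hQ0 u v) (le_of_lt (hpv v))) _)
    exact ⟨u0, Finset.mem_univ u0, Real.rpow_pos_of_pos (div_pos hu0 (hpv v)) _⟩
  have hpsum : ∑ v, p v = 1 := by rw [hp]; rw [Finset.sum_comm] at hQ1; exact hQ1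
  have hcheb : (∑ v, p v * (S v) ^ γ) * (∑ v, p v * S v) ≤
      ∑ v, p v * ((S v) ^ γ * S v) := by
    have := weighted_cheb p (fun v => (S v) ^ γ) S (fun v => le_of_lt (hpv v)) ?_
    · calc (∑ v, p v * (S v) ^ γ) * (∑ v, p v * S v)
          ≤ (∑ v, p v) * ∑ v, p v * ((S v) ^ γ * S v) := this
        _ = ∑ v, p v * ((S v) ^ γ * S v) := by rw [hpsum, one_mul]
    · intro i j
      rcases le_total (S i) (S j) with h | h
      · have h2 := Real.rpow_le_rpow (le_of_lt (hSv i)) h (le_of_lt hγ0)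
        nlinarith
      · have h2 := Real.rpow_le_rpow (le_of_lt (hSv j)) h (le_of_lt hγ0)
        nlinarith
  have hpow : ∀ v, (S v) ^ ((1:ℝ)+γ) = (S v) ^ γ * S v := by
    intro v
    rw [add_comm, Real.rpow_add (hSv v), Real.rpow_one]
  have hTE : (∑ v, p v * ((S v) ^ ((1:ℝ)+γ))) = ∑ v, p v * ((S v) ^ γ * S v) := by
    exact Finset.sum_congr rfl fun v _ => by rw [hpow v]
  have hTFpos : 0 < ∑ v, p v * (S v) ^ γ :=
    Finset.sum_pos (fun v _ => mul_pos (hpv v) (Real.rpow_pos_of_pos (hSv v) _))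
      Finset.univ_nonempty
  have hTGpos : 0 < ∑ v, p v * S v :=
    Finset.sum_pos (fun v _ => mul_pos (hpv v) (hSv v)) Finset.univ_nonempty
  have hlog : Real.logb 2 ((∑ v, p v * (S v) ^ γ) * (∑ v, p v * S v)) ≤
      Real.logb 2 (∑ v, p v * ((S v) ^ ((1:ℝ)+γ))) := by
    rw [hTE]
    exact Real.logb_le_logb_of_le (by norm_num) (mul_pos hTFpos hTGpos) hcheb
  rw [Real.logb_mul (ne_of_gt hTFpos) (ne_of_gt hTGpos)] at hlog
  have hrate' : γ * R > Real.logb 2 (∑ v, p v * ((S v) ^ ((1:ℝ)+γ))) := hrate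
  have key : Real.logb 2 (∑ v, p v * S v) <
      γ * R - Real.logb 2 (∑ v, p v * (S v) ^ γ) := by linarith
  have hcoef : 0 < (1+γ)/γ := div_pos (by linarith) hγ0
  exact mul_lt_mul_of_pos_left key hcoef
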